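/- Let h_p ≥ 0 and h_d ∈ ℝ, and suppose that either h_d ≥ (2h_p⁴ + 12h_p³ + 25h_p² + 30h_p + 11)/(3h_p² + 6h_p + 7), or h_p > 1 and h_d ≥ (h_p³ + 5h_p² + 8h_p + 10)/(h_p − 1). Then the quartic polynomial p(s) = s⁴ + (3 + h_p)s³ + (3 + h_d + (1 + h_p)²)s² + 2(1 + h_p)(1 + h_d)s + (1 + h_d)² has a complex root s₀ ∈ ℂ with Re(s₀) ≥ 0. (This polynomial is the denominator of the transfer function of the second-to-last vehicle in a bidirectional string with unit masses and gains and asymmetry coefficients h_p, h_d; having a root with nonnegative real part means strings of N ≥ 2 vehicles are unstable.) -/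

import Mathlib

open Complex

private lemma cubic_root (a b c : ℝ) : ∃ x : ℝ, x ^ 3 + a * x ^ 2 + b * x + c = 0 := by
  set M := 1 + |a| + |b| + |c| with hM
  have ha := abs_nonneg a
  have hb := abs_nonneg b
  have hc := abs_nonneg c
  have hM1 : 1 ≤ M := by linarith
  have hM0 : 0 ≤ M := by linarith
  have hcont : ContinuousOn (fun x : ℝ => x ^ 3 + a * x ^ 2 + b * x + c) (Set.Icc (-M) M) := by
    fun_prop
  have hle : (-M) ≤ M := by linarith
  have A1 : a * M ^ 2 ≤ |a| * M ^ 2 :=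
    mul_le_mul_of_nonneg_right (le_abs_self a) (by positivity)
  have A1' : -(|a| * M ^ 2) ≤ a * M ^ 2 := by
    nlinarith [mul_le_mul_of_nonneg_right (neg_abs_le a) (sq_nonneg M)]
  have A2 : -(b * M) ≤ |b| * M := by
    nlinarith [mul_le_mul_of_nonneg_right (neg_abs_le b) hM0]
  have A2' : -(|b| * M) ≤ b * M := by
    nlinarith [mul_le_mul_of_nonneg_right (neg_abs_le b) hM0]
  have A3 : c ≤ |c| := le_abs_self c
  have A3' : -|c| ≤ c := neg_abs_le c
  have hMM : M ≤ M ^ 2 := by nlinarith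
  have hM21 : 1 ≤ M ^ 2 := by nlinarith
  have A4 : |b| * M ≤ |b| * M ^ 2 := mul_le_mul_of_nonneg_left hMM hb
  have A5 : |c| ≤ |c| * M ^ 2 := le_mul_of_one_le_right hc hM21
  have h1 : (-M) ^ 3 + a * (-M) ^ 2 + b * (-M) + c ≤ 0 := by
    nlinarith [sq_nonneg M]
  have h2 : 0 ≤ M ^ 3 + a * M ^ 2 + b * M + c := by
    nlinarith [sq_nonneg M]
  obtain ⟨x, -, hx⟩ := intermediate_value_Icc hle hcont (Set.mem_Icc.mpr ⟨h1, h2⟩)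
  exact ⟨x, hx⟩

private lemma quad_root_neg (α β : ℝ)
    (h : ∀ z : ℂ, z ^ 2 + (α : ℂ) * z + (β : ℂ) = 0 → z.re < 0) : 0 < α ∧ 0 < β := by
  by_cases hD : 4 * β ≤ α ^ 2
  · have hs : Real.sqrt (α ^ 2 - 4 * β) ^ 2 = α ^ 2 - 4 * β :=
      Real.sq_sqrt (by linarith)
    have hs0 : 0 ≤ Real.sqrt (α ^ 2 - 4 * β) := Real.sqrt_nonneg _
    set r : ℝ := (-α + Real.sqrt (α ^ 2 - 4 * β)) / 2 with hr
    have hroot : r ^ 2 + α * r + β = 0 := by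
      rw [hr]; linear_combination hs / 4
    have hre : r < 0 := by
      have h0 : ((r : ℂ)) ^ 2 + (α : ℂ) * (r : ℂ) + (β : ℂ) = 0 := by exact_mod_cast hroot
      simpa using h r h0
    have hsα : Real.sqrt (α ^ 2 - 4 * β) < α := by
      rw [hr] at hre; linarith
    have hα : 0 < α := lt_of_le_of_lt hs0 hsα
    refine ⟨hα, ?_⟩
    nlinarith [hs, hs0, hsα]
  · push_neg at hD
    have hs : Real.sqrt (4 * β - α ^ 2) ^ 2 = 4 * β - α ^ 2 :=
      Real.sq_sqrt (by linarith)
    set t : ℝ := Real.sqrt (4 * β - α ^ 2) with htdef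
    set z : ℂ := (-(α / 2) : ℝ) + (t / 2 : ℝ) * Complex.I with hz
    have htc : (t : ℂ) ^ 2 = 4 * (β : ℂ) - (α : ℂ) ^ 2 := by exact_mod_cast hs
    have hroot : z ^ 2 + (α : ℂ) * z + (β : ℂ) = 0 := by
      rw [hz]
      push_cast
      linear_combination ((t : ℂ) ^ 2 / 4) * Complex.I_sq - (1 / 4 : ℂ) * htc
    have hre : z.re < 0 := h z hroot
    have hzre : z.re = -(α / 2) := by
      rw [hz]; simp
    have hα : 0 < α := by rw [hzre] at hre; linarith
    exact ⟨hα, by nlinarith [sq_nonneg α]⟩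

private lemma quartic_factor (a b c d : ℝ) :
    ∃ α β γ δ : ℝ, α + γ = a ∧ β + δ + α * γ = b ∧ α * δ + β * γ = c ∧ β * δ = d := by
  classical
  obtain ⟨z, hz⟩ := Complex.exists_root
    (f := Polynomial.X ^ 4 + Polynomial.C (a : ℂ) * Polynomial.X ^ 3
      + Polynomial.C (b : ℂ) * Polynomial.X ^ 2 + Polynomial.C (c : ℂ) * Polynomial.X
      + Polynomial.C (d : ℂ))
    (by
      have hdeg : (Polynomial.X ^ 4 + Polynomial.C (a : ℂ) * Polynomial.X ^ 3
          + Polynomial.C (b : ℂ) * Polynomial.X ^ 2 + Polynomial.C (c : ℂ) * Polynomial.X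
          + Polynomial.C (d : ℂ)).degree = 4 := by
        compute_degree!
      rw [hdeg]; norm_num)
  have hz' : z ^ 4 + (a : ℂ) * z ^ 3 + (b : ℂ) * z ^ 2 + (c : ℂ) * z + (d : ℂ) = 0 := by
    simpa [Polynomial.IsRoot] using hz
  by_cases him : z.im = 0
  · -- z is real
    have hzre : z = (z.re : ℂ) := Complex.ext (by simp) (by simp [him])
    have hxr : z.re ^ 4 + a * z.re ^ 3 + b * z.re ^ 2 + c * z.re + d = 0 := by
      have h0 := hz'
      rw [hzre] at h0
      exact_mod_cast h0
    obtain ⟨w, hw⟩ := cubic_root (a + z.re) (b + a * z.re + z.re ^ 2)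
      (c + b * z.re + a * z.re ^ 2 + z.re ^ 3)
    refine ⟨-(z.re + w), z.re * w, (a + z.re) + w,
      (b + a * z.re + z.re ^ 2) + (a + z.re) * w + w ^ 2, by ring, by ring, ?_, ?_⟩
    · linear_combination -hw
    · linear_combination z.re * hw - hxr
  · -- z is genuinely complex
    have hzxy : z = (z.re : ℂ) + (z.im : ℂ) * Complex.I := (Complex.re_add_im z).symm
    have hquad : z ^ 2 - 2 * (z.re : ℂ) * z + ((z.re : ℂ) ^ 2 + (z.im : ℂ) ^ 2) = 0 := by
      linear_combination (z - (z.re : ℂ) + (z.im : ℂ) * Complex.I) * hzxy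
        + ((z.im : ℂ) ^ 2) * Complex.I_sq
    have hrem : ((c - ((-(2 * z.re)) * (b - (z.re ^ 2 + z.im ^ 2) + 2 * z.re * (a + 2 * z.re))
          + (z.re ^ 2 + z.im ^ 2) * (a + 2 * z.re)) : ℝ) : ℂ) * z
        + ((d - (z.re ^ 2 + z.im ^ 2) * (b - (z.re ^ 2 + z.im ^ 2)
          + 2 * z.re * (a + 2 * z.re)) : ℝ) : ℂ) = 0 := by
      push_cast
      linear_combination hz' - (z ^ 2 + ((a : ℂ) + 2 * (z.re : ℂ)) * z
        + ((b : ℂ) - ((z.re : ℂ) ^ 2 + (z.im : ℂ) ^ 2)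
          + 2 * (z.re : ℂ) * ((a : ℂ) + 2 * (z.re : ℂ)))) * hquad
    obtain ⟨hr1, hr0⟩ : (c - ((-(2 * z.re)) * (b - (z.re ^ 2 + z.im ^ 2)
          + 2 * z.re * (a + 2 * z.re)) + (z.re ^ 2 + z.im ^ 2) * (a + 2 * z.re)) = 0)
        ∧ (d - (z.re ^ 2 + z.im ^ 2) * (b - (z.re ^ 2 + z.im ^ 2)
          + 2 * z.re * (a + 2 * z.re)) = 0) := by
      by_cases hr1 : c - ((-(2 * z.re)) * (b - (z.re ^ 2 + z.im ^ 2)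
          + 2 * z.re * (a + 2 * z.re)) + (z.re ^ 2 + z.im ^ 2) * (a + 2 * z.re)) = 0
      · refine ⟨hr1, ?_⟩
        rw [hr1] at hrem
        simp at hrem
        apply Complex.ofReal_injective
        rw [Complex.ofReal_zero, ← hrem]
        push_cast
        ring
      · exfalso
        apply him
        have hr1C : ((c - ((-(2 * z.re)) * (b - (z.re ^ 2 + z.im ^ 2)
            + 2 * z.re * (a + 2 * z.re)) + (z.re ^ 2 + z.im ^ 2) * (a + 2 * z.re)) : ℝ) : ℂ) ≠ 0 := by
          exact_mod_cast hr1
        have hzval : z = ((-(d - (z.re ^ 2 + z.im ^ 2) * (b - (z.re ^ 2 + z.im ^ 2)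
              + 2 * z.re * (a + 2 * z.re))) / (c - ((-(2 * z.re)) * (b - (z.re ^ 2 + z.im ^ 2)
              + 2 * z.re * (a + 2 * z.re)) + (z.re ^ 2 + z.im ^ 2) * (a + 2 * z.re))) : ℝ) : ℂ) := by
          have hrem' := hrem
          push_cast at hrem'
          rw [Complex.ofReal_div, eq_div_iff hr1C]
          push_cast
          linear_combination hrem'
        rw [hzval]
        exact Complex.ofReal_im _
    refine ⟨-(2 * z.re), z.re ^ 2 + z.im ^ 2, a + 2 * z.re,
      b - (z.re ^ 2 + z.im ^ 2) + 2 * z.re * (a + 2 * z.re), by ring, by ring, ?_, ?_⟩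
    · linarith [hr1]
    · linarith [hr0]

theorem stmt_18 (hp hd : ℝ) (hhp : 0 ≤ hp)
    (hcond :
      (2 * hp ^ 4 + 12 * hp ^ 3 + 25 * hp ^ 2 + 30 * hp + 11) / (3 * hp ^ 2 + 6 * hp + 7) ≤ hd ∨
      (1 < hp ∧ (hp ^ 3 + 5 * hp ^ 2 + 8 * hp + 10) / (hp - 1) ≤ hd)) :
    ∃ s₀ : ℂ,
      s₀ ^ 4 + (3 + (hp : ℂ)) * s₀ ^ 3 + (3 + (hd : ℂ) + (1 + (hp : ℂ)) ^ 2) * s₀ ^ 2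
          + 2 * (1 + (hp : ℂ)) * (1 + (hd : ℂ)) * s₀ + (1 + (hd : ℂ)) ^ 2 = 0 ∧
      0 ≤ s₀.re := by
  by_contra hcon
  push_neg at hcon
  -- key inequalities from the hypothesis
  have hD1 : (0 : ℝ) < 3 * hp ^ 2 + 6 * hp + 7 := by positivity
  have key : 2 * hp ^ 4 + 12 * hp ^ 3 + 25 * hp ^ 2 + 30 * hp + 11 ≤
      hd * (3 * hp ^ 2 + 6 * hp + 7) ∧ 0 ≤ hd := by
    rcases hcond with h1 | ⟨hp1, h2⟩
    · rw [div_le_iff₀ hD1] at h1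
      have hN1 : (0 : ℝ) ≤ 2 * hp ^ 4 + 12 * hp ^ 3 + 25 * hp ^ 2 + 30 * hp + 11 := by
        nlinarith [pow_nonneg hhp 4, pow_nonneg hhp 3, sq_nonneg hp]
      constructor
      · linarith
      · nlinarith [h1, hN1]
    · have hp0 : (0 : ℝ) < hp - 1 := by linarith
      rw [div_le_iff₀ hp0] at h2
      have key2 : 0 ≤ hd := by
        nlinarith [h2, hp0, pow_nonneg hhp 3, sq_nonneg hp, hhp]
      have hstep : 0 ≤ (hp - 1) * (hd * (3 * hp ^ 2 + 6 * hp + 7)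
          - (2 * hp ^ 4 + 12 * hp ^ 3 + 25 * hp ^ 2 + 30 * hp + 11)) := by
        nlinarith [mul_le_mul_of_nonneg_left h2 hD1.le, pow_nonneg hhp 5, pow_nonneg hhp 4,
          pow_nonneg hhp 3, sq_nonneg hp, hhp]
      exact ⟨by nlinarith [hstep, hp0], key2⟩
  obtain ⟨key1, key2⟩ := key
  -- factor the quartic into two real quadratics
  obtain ⟨α, β, γ, δ, e1, e2, e3, e4⟩ :=
    quartic_factor (3 + hp) (3 + hd + (1 + hp) ^ 2) (2 * (1 + hp) * (1 + hd)) ((1 + hd) ^ 2)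
  have ce1 : (α : ℂ) + (γ : ℂ) = 3 + (hp : ℂ) := by exact_mod_cast e1
  have ce2 : (β : ℂ) + (δ : ℂ) + (α : ℂ) * (γ : ℂ) = 3 + (hd : ℂ) + (1 + (hp : ℂ)) ^ 2 := by
    exact_mod_cast e2
  have ce3 : (α : ℂ) * (δ : ℂ) + (β : ℂ) * (γ : ℂ) = 2 * (1 + (hp : ℂ)) * (1 + (hd : ℂ)) := by
    exact_mod_cast e3
  have ce4 : (β : ℂ) * (δ : ℂ) = (1 + (hd : ℂ)) ^ 2 := by exact_mod_cast e4
  have hroots1 : ∀ z : ℂ, z ^ 2 + (α : ℂ) * z + (β : ℂ) = 0 → z.re < 0 := by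
    intro z hzq
    refine hcon z ?_
    linear_combination (z ^ 2 + (γ : ℂ) * z + (δ : ℂ)) * hzq
      - z ^ 3 * ce1 - z ^ 2 * ce2 - z * ce3 - ce4
  have hroots2 : ∀ z : ℂ, z ^ 2 + (γ : ℂ) * z + (δ : ℂ) = 0 → z.re < 0 := by
    intro z hzq
    refine hcon z ?_
    linear_combination (z ^ 2 + (α : ℂ) * z + (β : ℂ)) * hzq
      - z ^ 3 * ce1 - z ^ 2 * ce2 - z * ce3 - ce4
  obtain ⟨hα, hβ⟩ := quad_root_neg α β hroots1
  obtain ⟨hγ, hδ⟩ := quad_root_neg γ δ hroots2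
  -- the Hurwitz quantity
  have hE : (3 + hp) * (3 + hd + (1 + hp) ^ 2) * (2 * (1 + hp) * (1 + hd)) ≤
      (2 * (1 + hp) * (1 + hd)) ^ 2 + (3 + hp) ^ 2 * (1 + hd) ^ 2 := by
    nlinarith [mul_nonneg (by linarith : (0 : ℝ) ≤ hd * (3 * hp ^ 2 + 6 * hp + 7)
      - (2 * hp ^ 4 + 12 * hp ^ 3 + 25 * hp ^ 2 + 30 * hp + 11))
      (by linarith : (0 : ℝ) ≤ hd + 1)]
  have hsub : (3 + hp) * (3 + hd + (1 + hp) ^ 2) * (2 * (1 + hp) * (1 + hd))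
      - (2 * (1 + hp) * (1 + hd)) ^ 2 - (3 + hp) ^ 2 * (1 + hd) ^ 2
      = α * γ * ((β - δ) ^ 2 + (α + γ) * (α * δ + β * γ)) := by
    rw [← e1, ← e2, ← e3, ← e4]; ring
  have hfin : 0 < α * γ * ((β - δ) ^ 2 + (α + γ) * (α * δ + β * γ)) := by
    nlinarith [mul_pos (mul_pos hα hγ)
        (mul_pos (add_pos hα hγ) (add_pos (mul_pos hα hδ) (mul_pos hβ hγ))),
      mul_nonneg (mul_nonneg hα.le hγ.le) (sq_nonneg (β - δ))]
  linarith [hE, hsub.symm ▸ hfin]
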